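/- (NML achieves constant regret and uniquely minimizes worst-case regret) Let {P_θ : θ ∈ Θ} be a family of distributions on a finite set X^n such that for each x there is a maximizer θ̂(x) of θ ↦ P_θ(x), and suppose C := ∑_{x} P_{θ̂(x)}(x) is finite and positive. Define P_nml(x) = P_{θ̂(x)}(x) / C. Then: (1) for every x, - log₂ P_nml(x) + log₂ P_{θ̂(x)}(x) = log₂ C; (2) for every probability distribution Q ≠ P_nml on X^n, max_x [ - log₂ Q(x) + log₂ P_{θ̂(x)}(x) ] > log₂ C. Hence P_nml is the unique minimizer of the worst-case regret. -/
import Mathlib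


open Finset

/-- (NML achieves constant regret and uniquely minimizes worst-case regret.) Let
`{P_θ : θ ∈ Θ}` be a family of distributions on a finite set, `θ̂ x` a maximizer of
`θ ↦ P_θ(x)` for each `x` (with positive maximal likelihood), and
`C = ∑_x P_{θ̂(x)}(x) > 0`. Then the normalized maximum likelihood distribution
`P_nml(x) = P_{θ̂(x)}(x)/C` has regret exactly `log₂ C` at every `x`, and every other
(everywhere positive) probability distribution `Q` has worst-case regret
strictly larger than `log₂ C`. -/
theorem nml_minimax_regret (Θ : Type*) (X : Type*) [Fintype X] [Nonempty X]
    (P : Θ → X → ℝ) (θhat : X → Θ)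
    (hml : ∀ (x : X) (θ : Θ), P θ x ≤ P (θhat x) x)
    (hpos : ∀ x : X, 0 < P (θhat x) x) :
    (∀ x : X,
      -Real.logb 2 (P (θhat x) x / ∑ y, P (θhat y) y) + Real.logb 2 (P (θhat x) x)
        = Real.logb 2 (∑ y, P (θhat y) y)) ∧
    (∀ Q : X → ℝ, (∀ x, 0 < Q x) → (∑ x, Q x = 1) →
      Q ≠ (fun x => P (θhat x) x / ∑ y, P (θhat y) y) →
      Real.logb 2 (∑ y, P (θhat y) y) <
        Finset.univ.sup' Finset.univ_nonempty
          (fun x => -Real.logb 2 (Q x) + Real.logb 2 (P (θhat x) x))) := by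

  set C := ∑ y, P (θhat y) y with hC
  have hCpos : 0 < C := Finset.sum_pos (fun x _ => hpos x) Finset.univ_nonempty
  constructor
  · intro x
    rw [Real.logb_div (hpos x).ne' hCpos.ne']
    ring
  · intro Q hQpos hQsum hQne
    have hPsum : ∑ x, P (θhat x) x / C = 1 := by
      rw [← Finset.sum_div, ← hC, div_self hCpos.ne']
    have hz : ∃ z : X, Q z < P (θhat z) z / C := by
      by_contra h
      push_neg at h
      apply hQne
      funext x
      have := (Finset.sum_eq_sum_iff_of_le (fun i _ => h i)).mp
        (by rw [hQsum, hPsum]) x (Finset.mem_univ x)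
      exact this.symm
    obtain ⟨z, hz⟩ := hz
    have key : Real.logb 2 C < -Real.logb 2 (Q z) + Real.logb 2 (P (θhat z) z) := by
      have h1 : C < P (θhat z) z / Q z := by
        rw [lt_div_iff₀ (hQpos z)]
        calc C * Q z < C * (P (θhat z) z / C) := by
              exact (mul_lt_mul_iff_right₀ hCpos).mpr hz
          _ = P (θhat z) z := by field_simp
      have h2 := Real.logb_lt_logb (b := 2) (by norm_num) hCpos h1
      rw [Real.logb_div (hpos z).ne' (hQpos z).ne'] at h2
      linarith
    calc Real.logb 2 C < -Real.logb 2 (Q z) + Real.logb 2 (P (θhat z) z) := key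
      _ ≤ _ := Finset.le_sup' (fun x => -Real.logb 2 (Q x) + Real.logb 2 (P (θhat x) x)) (Finset.mem_univ z)
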